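/- Every nonzero right R-module M that has couniserial dimension contains a uniform submodule. -/

import Mathlib

universe u v w

/-- A module is *uniform* if it is nonzero and any two nonzero submodules intersect
nontrivially. -/
def IsUniformModule (R : Type u) [Ring R] (M : Type v) [AddCommGroup M] [Module R M] : Prop :=
  Nontrivial M ∧ ∀ N₁ N₂ : Submodule R M, N₁ ≠ ⊥ → N₂ ≠ ⊥ → N₁ ⊓ N₂ ≠ ⊥

/-- The classes `ζ_α`, defined by transfinite induction: `ζ_1` is the class of uniform
modules, and for `α > 1`, `M ∈ ζ_α` iff every nonzero submodule `N` of `M` with `N ≇ M`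
lies in `ζ_β` for some `β < α`. -/
def ModuleZeta (R : Type u) [Ring R] (α : Ordinal.{v}) (M : Type v) [AddCommGroup M]
    [Module R M] : Prop :=
  (α = 1 ∧ IsUniformModule R M) ∨
    (1 < α ∧ ∀ N : Submodule R M, N ≠ ⊥ → ¬ Nonempty (N ≃ₗ[R] M) →
      ∃ β, ∃ _ : β < α, ModuleZeta R β N)
termination_by α

/-- A module has couniserial dimension iff it lies in `ζ_α` for some ordinal `α`. -/
def HasCUDim (R : Type u) [Ring R] (M : Type v) [AddCommGroup M] [Module R M] : Prop :=
  ∃ α : Ordinal.{v}, ModuleZeta R α M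

open Classical in
/-- The couniserial dimension of a module: the least `α` with `M ∈ ζ_α`, with the
convention that the zero module has couniserial dimension `0`. -/
noncomputable def cuDim (R : Type u) [Ring R] (M : Type v) [AddCommGroup M] [Module R M] :
    Ordinal.{v} :=
  if Subsingleton M then 0 else sInf {α | ModuleZeta R α M}

/-- A submodule is *essential* if it meets every nonzero submodule nontrivially. -/
def IsEssentialSubmodule (R : Type u) [Ring R] {M : Type v} [AddCommGroup M] [Module R M]
    (N : Submodule R M) : Prop :=
  ∀ K : Submodule R M, K ≠ ⊥ → N ⊓ K ≠ ⊥

/-- A module is *indecomposable* if it is nonzero and is not an (internal) direct sum of two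
nonzero submodules. -/
def IsIndecomposableModule (R : Type u) [Ring R] (M : Type v) [AddCommGroup M]
    [Module R M] : Prop :=
  Nontrivial M ∧ ∀ A B : Submodule R M, IsCompl A B → A = ⊥ ∨ B = ⊥

/-- A module is *coHopfian* if it is not isomorphic to a proper submodule of itself. -/
def IsCoHopfianModule (R : Type u) [Ring R] (M : Type v) [AddCommGroup M] [Module R M] : Prop :=
  ∀ N : Submodule R M, Nonempty (M ≃ₗ[R] N) → N = ⊤

/-- A module is *fully coHopfian* if every submodule is coHopfian. -/
def IsFullyCoHopfianModule (R : Type u) [Ring R] (M : Type v) [AddCommGroup M]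
    [Module R M] : Prop :=
  ∀ N : Submodule R M, IsCoHopfianModule R N

/-- A module `N` has the *cancellation property* if `N ⊕ A ≅ N ⊕ B` implies `A ≅ B`. -/
def HasCancellation (R : Type u) [Ring R] (N : Type v) [AddCommGroup N] [Module R N] : Prop :=
  ∀ (A B : Type v) [AddCommGroup A] [Module R A] [AddCommGroup B] [Module R B],
    Nonempty ((N × A) ≃ₗ[R] (N × B)) → Nonempty (A ≃ₗ[R] B)

/-- A module is *Dedekind finite* if it is not isomorphic to a proper direct summand of
itself. -/
def IsDedekindFiniteModule (R : Type u) [Ring R] (M : Type v) [AddCommGroup M]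
    [Module R M] : Prop :=
  ∀ A B : Submodule R M, IsCompl A B → Nonempty (M ≃ₗ[R] A) → B = ⊥

/-- A ring is *semiprime* if it has no nonzero nilpotent two-sided ideal; equivalently,
`a R a = 0` implies `a = 0`. -/
def IsSemiprimeRing (R : Type u) [Ring R] : Prop :=
  ∀ a : R, (∀ x : R, a * x * a = 0) → a = 0

/-- An ideal is an *annihilator ideal* if it is the annihilator of a subset of the ring. -/
def IsAnnihilatorIdeal (R : Type u) [Ring R] (I : Ideal R) : Prop :=
  ∃ S : Set R, (I : Set R) = {x : R | ∀ s ∈ S, x * s = 0}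

/-- A module has *uniform dimension `n`* if it contains `n` independent uniform submodules
whose direct sum is essential. -/
def HasFiniteUniformDim (R : Type u) [Ring R] (M : Type v) [AddCommGroup M] [Module R M]
    (n : ℕ) : Prop :=
  ∃ U : Fin n → Submodule R M, iSupIndep U ∧ (∀ i, IsUniformModule R (U i)) ∧
    IsEssentialSubmodule R (⨆ i, U i)

/-- A ring is *Goldie* if it has the ascending chain condition on annihilator ideals and
finite uniform dimension as a module over itself. -/
def IsGoldieRing (R : Type u) [Ring R] : Prop :=
  (∀ f : ℕ → Ideal R, (∀ n, IsAnnihilatorIdeal R (f n)) → Monotone f →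
      ∃ n, ∀ k, n ≤ k → f k = f n) ∧
    ∃ n : ℕ, HasFiniteUniformDim R R n


theorem uniform_congr (R : Type u) [Ring R] {M₁ : Type v} {M₂ : Type w} [AddCommGroup M₁]
    [Module R M₁] [AddCommGroup M₂] [Module R M₂] (e : M₁ ≃ₗ[R] M₂)
    (h : IsUniformModule R M₁) : IsUniformModule R M₂ := by
  obtain ⟨hnt, huni⟩ := h
  haveI := hnt
  refine ⟨e.symm.toEquiv.nontrivial, fun N₁ N₂ h1 h2 hinf => ?_⟩
  have hinj : Function.Injective e.symm.toLinearMap := e.symm.injective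
  have hb : ∀ N : Submodule R M₂, N ≠ ⊥ → Submodule.map e.symm.toLinearMap N ≠ ⊥ := by
    intro N hN hc
    apply hN
    rw [eq_bot_iff]
    intro x hx
    have hm : e.symm x ∈ Submodule.map e.symm.toLinearMap N := ⟨x, hx, rfl⟩
    rw [hc, Submodule.mem_bot] at hm
    have hx0 : x = 0 := e.symm.injective (a₂ := 0) (by simpa using hm)
    simpa [hx0] using Submodule.zero_mem (⊥ : Submodule R M₂)
  have hcon := huni _ _ (hb N₁ h1) (hb N₂ h2)
  rw [← Submodule.map_inf _ hinj, hinf, Submodule.map_bot] at hcon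
  exact hcon rfl

theorem uniform_of_all_iso (R : Type u) [Ring R] (M : Type v) [AddCommGroup M] [Module R M]
    [Nontrivial M] (hall : ∀ P : Submodule R M, P ≠ ⊥ → Nonempty (P ≃ₗ[R] M)) :
    IsUniformModule R M := by
  classical
  -- M is cyclic
  obtain ⟨x, hx⟩ := exists_ne (0 : M)
  have hS : Submodule.span R {x} ≠ ⊥ := fun h => hx (Submodule.span_singleton_eq_bot.mp h)
  obtain ⟨e⟩ := hall _ hS
  have hgen : Submodule.span R {(⟨x, Submodule.mem_span_singleton_self x⟩ :
      Submodule.span R {x})} = ⊤ := by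
    rw [eq_top_iff]
    rintro ⟨y, hy⟩ _
    rw [Submodule.mem_span_singleton] at hy
    obtain ⟨r, hr⟩ := hy
    rw [Submodule.mem_span_singleton]
    exact ⟨r, Subtype.ext hr⟩
  have hcyc : ∃ w : M, Submodule.span R {w} = ⊤ := by
    refine ⟨e ⟨x, Submodule.mem_span_singleton_self x⟩, ?_⟩
    have hms := Submodule.map_span e.toLinearMap
      {(⟨x, Submodule.mem_span_singleton_self x⟩ : Submodule.span R {x})}
    rw [hgen] at hms
    simpa [Submodule.map_top, LinearEquiv.range] using hms.symm
  obtain ⟨w, hw⟩ := hcyc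
  -- every nonzero submodule is spanned by one element
  have hcycsub : ∀ C : Submodule R M, C ≠ ⊥ → ∃ c, c ∈ C ∧ C = Submodule.span R {c} := by
    intro C hC
    obtain ⟨f⟩ := hall C hC
    set c : C := f.symm w with hc
    have h1 : Submodule.span R {c} = ⊤ := by
      have hms := Submodule.map_span f.symm.toLinearMap ({w} : Set M)
      rw [hw] at hms
      simpa [Submodule.map_top, LinearEquiv.range, hc] using hms.symm
    refine ⟨(c : M), c.2, ?_⟩
    have hms := Submodule.map_span C.subtype ({c} : Set C)
    rw [h1] at hms
    simpa [Submodule.map_top, Submodule.range_subtype] using hms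
  constructor
  · infer_instance
  intro A B hA hB hAB
  obtain ⟨eA⟩ := hall A hA
  set f : M →ₗ[R] M := A.subtype.comp eA.symm.toLinearMap with hf
  have hfinj : Function.Injective f := by
    simp only [hf, LinearMap.coe_comp]
    exact (Submodule.injective_subtype A).comp eA.symm.injective
  have hfA : ∀ P : Submodule R M, Submodule.map f P ≤ A := by
    rintro P _ ⟨y, _, rfl⟩
    exact (eA.symm y).2
  let Bs : ℕ → Submodule R M := fun n => Nat.rec B (fun _ ih => Submodule.map f ih) n
  have hBs0 : Bs 0 = B := rfl
  have hBsS : ∀ n, Bs (n + 1) = Submodule.map f (Bs n) := fun n => rfl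
  have hBsne : ∀ n, Bs n ≠ ⊥ := by
    intro n
    induction n with
    | zero => exact hB
    | succ n ih =>
      rw [hBsS]
      intro hc
      apply ih
      rw [eq_bot_iff]
      intro y hy
      have hm : f y ∈ Submodule.map f (Bs n) := ⟨y, hy, rfl⟩
      rw [hc, Submodule.mem_bot] at hm
      have hy0 : y = 0 := hfinj (a₂ := 0) (by simpa using hm)
      simpa [hy0] using Submodule.zero_mem (⊥ : Submodule R M)
  let D : ℕ → Submodule R M := fun k => Nat.rec (Bs 0) (fun k ih => ih ⊔ Bs (k + 1)) k
  have hD0 : D 0 = Bs 0 := rfl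
  have hDS : ∀ k, D (k + 1) = D k ⊔ Bs (k + 1) := fun k => rfl
  have hDshift : ∀ k, D (k + 1) = Bs 0 ⊔ Submodule.map f (D k) := by
    intro k
    induction k with
    | zero => rfl
    | succ k ih =>
      conv_lhs => rw [hDS (k + 1), ih, hBsS (k + 1)]
      rw [sup_assoc, ← Submodule.map_sup, ← hDS k]
  have hindep : ∀ k, Bs (k + 1) ⊓ D k = ⊥ := by
    intro k
    induction k with
    | zero =>
      rw [eq_bot_iff, ← hAB]
      intro y hy
      rw [Submodule.mem_inf] at hy
      obtain ⟨h1, h2⟩ := hy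
      rw [hBsS] at h1
      exact ⟨hfA _ h1, h2⟩
    | succ k ih =>
      rw [eq_bot_iff]
      intro y hy
      rw [Submodule.mem_inf] at hy
      obtain ⟨h1', h2'⟩ := hy
      have h1 : y ∈ Submodule.map f (Bs (k + 1)) := hBsS (k + 1) ▸ h1'
      have hyA : y ∈ A := hfA _ h1
      have h2'' : y ∈ Bs 0 ⊔ Submodule.map f (D k) := hDshift k ▸ h2'
      rw [Submodule.mem_sup] at h2''
      have h2 := h2''
      obtain ⟨b, hb, z, hz, hbz⟩ := h2
      have hzA : z ∈ A := hfA _ hz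
      have hbA : b ∈ A := by
        have hbe : b = y - z := by rw [← hbz]; abel
        rw [hbe]; exact A.sub_mem hyA hzA
      have hb0 : b = 0 := by
        have hm : b ∈ A ⊓ B := ⟨hbA, hb⟩
        rwa [hAB, Submodule.mem_bot] at hm
      have hyz : y = z := by rw [← hbz, hb0, zero_add]
      obtain ⟨u, hu, hfu⟩ := h1
      rw [hyz] at hfu
      obtain ⟨v, hv, hfv⟩ := hz
      have huv : u = v := hfinj (by rw [hfu, hfv])
      have hm : u ∈ Bs (k + 1) ⊓ D k := ⟨hu, huv ▸ hv⟩
      rw [ih, Submodule.mem_bot] at hm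
      rw [Submodule.mem_bot, hyz, ← hfv, ← huv, hm, map_zero]
  set C : Submodule R M := ⨆ n, Bs n with hCdef
  have hCne : C ≠ ⊥ := by
    intro hc
    apply hBsne 0
    rw [eq_bot_iff, ← hc]
    exact le_iSup Bs 0
  obtain ⟨c, hcC, hCc⟩ := hcycsub C hCne
  have hcs : c ∈ ⨆ n, Bs n := hcC
  rw [Submodule.mem_iSup_iff_exists_finset] at hcs
  obtain ⟨s, hs⟩ := hcs
  set k := s.sup id with hk
  have hBle : ∀ i, i ≤ k → Bs i ≤ D k := by
    intro i hik
    have h1 : ∀ j, Bs j ≤ D j := by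
      intro j
      cases j with
      | zero => exact le_of_eq hD0.symm
      | succ j => rw [hDS]; exact le_sup_right
    have h2 : ∀ a b : ℕ, a ≤ b → D a ≤ D b := by
      intro a b hab
      induction hab with
      | refl => exact le_rfl
      | step _ ih' => exact le_trans ih' (by rw [hDS]; exact le_sup_left)
    exact le_trans (h1 i) (h2 i k hik)
  have hcD : c ∈ D k :=
    (iSup_le fun i => iSup_le fun hi => hBle i (Finset.le_sup (f := id) hi)) hs
  have hCD : C ≤ D k := by
    rw [hCc, Submodule.span_le]
    simpa using hcD
  have hle : Bs (k + 1) ≤ D k := le_trans (le_iSup Bs (k + 1)) hCD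
  exact hBsne (k + 1) ((inf_eq_left.mpr hle).symm.trans (hindep k))

theorem zeta_uniform (R : Type u) [Ring R] (α : Ordinal.{v}) :
    ∀ (M : Type v) [AddCommGroup M] [Module R M], Nontrivial M → ModuleZeta R α M →
      ∃ N : Submodule R M, N ≠ ⊥ ∧ IsUniformModule R N := by
  induction α using Ordinal.induction with
  | _ α IH =>
    intro M _ _ hnt hz
    haveI := hnt
    have htopne : (⊤ : Submodule R M) ≠ ⊥ :=
      Submodule.nontrivial_iff_ne_bot.mp (Submodule.topEquiv (R := R) (M := M)).toEquiv.nontrivial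
    rw [ModuleZeta] at hz
    rcases hz with ⟨-, huni⟩ | ⟨hα, hsub⟩
    · exact ⟨⊤, htopne, uniform_congr R Submodule.topEquiv.symm huni⟩
    · by_cases hall : ∀ P : Submodule R M, P ≠ ⊥ → Nonempty (P ≃ₗ[R] M)
      · exact ⟨⊤, htopne,
          uniform_congr R Submodule.topEquiv.symm (uniform_of_all_iso R M hall)⟩
      · push_neg at hall
        obtain ⟨P, hPne, hPiso⟩ := hall
        obtain ⟨β, hβ, hzP⟩ := hsub P hPne (not_nonempty_iff.mpr hPiso)
        haveI hPnt : Nontrivial ↥P := Submodule.nontrivial_iff_ne_bot.mpr hPne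
        obtain ⟨U, hUne, hUuni⟩ := IH β hβ ↥P hPnt hzP
        refine ⟨U.map P.subtype, ?_,
          uniform_congr R (Submodule.equivMapOfInjective P.subtype
            (Submodule.injective_subtype P) U) hUuni⟩
        intro hc
        apply hUne
        have hmi := Submodule.map_injective_of_injective (Submodule.injective_subtype P)
        apply hmi
        rw [hc, Submodule.map_bot]

/-- Every nonzero module with couniserial dimension contains a uniform
submodule. -/
theorem stmt2 (R : Type u) [Ring R] (M : Type v) [AddCommGroup M] [Module R M] [Nontrivial M]
    (h : HasCUDim R M) :
    ∃ N : Submodule R M, N ≠ ⊥ ∧ IsUniformModule R N := by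
  obtain ⟨α, hz⟩ := h
  exact zeta_uniform R α M ‹Nontrivial M› hz
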